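/- Let E be a real normed vector space and F a real inner product space. Let a, b, v : E → F be differentiable at a point x with ‖a(x)‖ = 1 and ‖b(x)‖ = 1, and define p : E → F by p(y) = ⟨a(y), v(y)⟩·a(y) − ⟨b(y), v(y)⟩·b(y). Then p is differentiable at x and its derivative satisfies ‖Dp(x)‖ ≤ 2·‖Da(x) − Db(x)‖·‖v(x)‖ + 2·max(‖Da(x)‖, ‖Db(x)‖)·‖a(x) − b(x)‖·‖v(x)‖ + 2·‖a(x) − b(x)‖·‖Dv(x)‖ (operator norms on derivatives). -/

import Mathlib

open scoped RealInnerProductSpace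

theorem projection_difference_derivative_bound
    {E : Type*} [NormedAddCommGroup E] [NormedSpace ℝ E]
    {F : Type*} [NormedAddCommGroup F] [InnerProductSpace ℝ F]
    (a b v : E → F) (x : E)
    (ha : DifferentiableAt ℝ a x) (hb : DifferentiableAt ℝ b x)
    (hv : DifferentiableAt ℝ v x)
    (hax : ‖a x‖ = 1) (hbx : ‖b x‖ = 1) :
    DifferentiableAt ℝ (fun y => ⟪a y, v y⟫ • a y - ⟪b y, v y⟫ • b y) x ∧
    ‖fderiv ℝ (fun y => ⟪a y, v y⟫ • a y - ⟪b y, v y⟫ • b y) x‖ ≤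
      2 * ‖fderiv ℝ a x - fderiv ℝ b x‖ * ‖v x‖
        + 2 * max ‖fderiv ℝ a x‖ ‖fderiv ℝ b x‖ * ‖a x - b x‖ * ‖v x‖
        + 2 * ‖a x - b x‖ * ‖fderiv ℝ v x‖ := by
  have hA := ha.hasFDerivAt
  have hB := hb.hasFDerivAt
  have hV := hv.hasFDerivAt
  set A := fderiv ℝ a x
  set B := fderiv ℝ b x
  set V := fderiv ℝ v x
  have h1 : HasFDerivAt (fun y => ⟪a y, v y⟫ • a y)
      ((⟪a x, v x⟫) • A + ((fderivInnerCLM ℝ (a x, v x)).comp (A.prod V)).smulRight (a x)) x :=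
    (hA.inner ℝ hV).smul hA
  have h2 : HasFDerivAt (fun y => ⟪b y, v y⟫ • b y)
      ((⟪b x, v x⟫) • B + ((fderivInnerCLM ℝ (b x, v x)).comp (B.prod V)).smulRight (b x)) x :=
    (hB.inner ℝ hV).smul hB
  have hp : HasFDerivAt (fun y => ⟪a y, v y⟫ • a y - ⟪b y, v y⟫ • b y) _ x := h1.sub h2
  refine ⟨hp.differentiableAt, ?_⟩
  rw [hp.fderiv]
  apply ContinuousLinearMap.opNorm_le_bound _ (by positivity)
  intro u
  have heq : ((⟪a x, v x⟫) • A +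
        ((fderivInnerCLM ℝ (a x, v x)).comp (A.prod V)).smulRight (a x) -
        ((⟪b x, v x⟫) • B +
        ((fderivInnerCLM ℝ (b x, v x)).comp (B.prod V)).smulRight (b x))) u =
      (⟪a x, v x⟫) • ((A - B) u) + (⟪a x - b x, v x⟫) • (B u)
      + (⟪(A - B) u, v x⟫) • (a x) + (⟪B u, v x⟫) • (a x - b x)
      + (⟪a x - b x, V u⟫) • (a x) + (⟪b x, V u⟫) • (a x - b x) := by
    simp only [ContinuousLinearMap.sub_apply, ContinuousLinearMap.add_apply,
      ContinuousLinearMap.smul_apply, ContinuousLinearMap.smulRight_apply,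
      ContinuousLinearMap.comp_apply, ContinuousLinearMap.prod_apply,
      fderivInnerCLM_apply, inner_sub_left, inner_sub_right]
    module
  rw [heq]
  have hn : ∀ (r : ℝ) (w : F), ‖r • w‖ = |r| * ‖w‖ := fun r w => by
    rw [norm_smul, Real.norm_eq_abs]
  have bAB : ‖(A - B) u‖ ≤ ‖A - B‖ * ‖u‖ := (A - B).le_opNorm u
  have bB : ‖B u‖ ≤ ‖B‖ * ‖u‖ := B.le_opNorm u
  have bV : ‖V u‖ ≤ ‖V‖ * ‖u‖ := V.le_opNorm u
  have i1 : |⟪a x, v x⟫| ≤ ‖v x‖ := by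
    have := abs_real_inner_le_norm (a x) (v x); rwa [hax, one_mul] at this
  have i2 : |⟪a x - b x, v x⟫| ≤ ‖a x - b x‖ * ‖v x‖ := abs_real_inner_le_norm _ _
  have i3 : |⟪(A - B) u, v x⟫| ≤ ‖A - B‖ * ‖u‖ * ‖v x‖ := by
    calc |⟪(A - B) u, v x⟫| ≤ ‖(A - B) u‖ * ‖v x‖ := abs_real_inner_le_norm _ _
    _ ≤ ‖A - B‖ * ‖u‖ * ‖v x‖ := by gcongr
  have i4 : |⟪B u, v x⟫| ≤ ‖B‖ * ‖u‖ * ‖v x‖ := by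
    calc |⟪B u, v x⟫| ≤ ‖B u‖ * ‖v x‖ := abs_real_inner_le_norm _ _
    _ ≤ ‖B‖ * ‖u‖ * ‖v x‖ := by gcongr
  have i5 : |⟪a x - b x, V u⟫| ≤ ‖a x - b x‖ * (‖V‖ * ‖u‖) := by
    calc |⟪a x - b x, V u⟫| ≤ ‖a x - b x‖ * ‖V u‖ := abs_real_inner_le_norm _ _
    _ ≤ ‖a x - b x‖ * (‖V‖ * ‖u‖) := by gcongr
  have i6 : |⟪b x, V u⟫| ≤ ‖V‖ * ‖u‖ := by
    have := abs_real_inner_le_norm (b x) (V u); rw [hbx, one_mul] at this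
    exact this.trans bV
  have hBmax : ‖B‖ ≤ max ‖A‖ ‖B‖ := le_max_right _ _
  have t1 : ‖(⟪a x, v x⟫) • ((A - B) u)‖ ≤ ‖A - B‖ * ‖v x‖ * ‖u‖ := by
    rw [hn]
    calc |⟪a x, v x⟫| * ‖(A - B) u‖ ≤ ‖v x‖ * (‖A - B‖ * ‖u‖) := by
          exact mul_le_mul i1 bAB (norm_nonneg _) (norm_nonneg _)
    _ = ‖A - B‖ * ‖v x‖ * ‖u‖ := by ring
  have t2 : ‖(⟪a x - b x, v x⟫) • (B u)‖ ≤ ‖B‖ * ‖a x - b x‖ * ‖v x‖ * ‖u‖ := by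
    rw [hn]
    calc |⟪a x - b x, v x⟫| * ‖B u‖ ≤ (‖a x - b x‖ * ‖v x‖) * (‖B‖ * ‖u‖) := by
          exact mul_le_mul i2 bB (norm_nonneg _) (by positivity)
    _ = ‖B‖ * ‖a x - b x‖ * ‖v x‖ * ‖u‖ := by ring
  have t3 : ‖(⟪(A - B) u, v x⟫) • (a x)‖ ≤ ‖A - B‖ * ‖v x‖ * ‖u‖ := by
    rw [hn, hax, mul_one]
    calc |⟪(A - B) u, v x⟫| ≤ ‖A - B‖ * ‖u‖ * ‖v x‖ := i3
    _ = ‖A - B‖ * ‖v x‖ * ‖u‖ := by ring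
  have t4 : ‖(⟪B u, v x⟫) • (a x - b x)‖ ≤ ‖B‖ * ‖a x - b x‖ * ‖v x‖ * ‖u‖ := by
    rw [hn]
    calc |⟪B u, v x⟫| * ‖a x - b x‖ ≤ (‖B‖ * ‖u‖ * ‖v x‖) * ‖a x - b x‖ := by
          exact mul_le_mul_of_nonneg_right i4 (norm_nonneg _)
    _ = ‖B‖ * ‖a x - b x‖ * ‖v x‖ * ‖u‖ := by ring
  have t5 : ‖(⟪a x - b x, V u⟫) • (a x)‖ ≤ ‖a x - b x‖ * ‖V‖ * ‖u‖ := by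
    rw [hn, hax, mul_one]
    calc |⟪a x - b x, V u⟫| ≤ ‖a x - b x‖ * (‖V‖ * ‖u‖) := i5
    _ = ‖a x - b x‖ * ‖V‖ * ‖u‖ := by ring
  have t6 : ‖(⟪b x, V u⟫) • (a x - b x)‖ ≤ ‖a x - b x‖ * ‖V‖ * ‖u‖ := by
    rw [hn]
    calc |⟪b x, V u⟫| * ‖a x - b x‖ ≤ (‖V‖ * ‖u‖) * ‖a x - b x‖ := by
          exact mul_le_mul_of_nonneg_right i6 (norm_nonneg _)
    _ = ‖a x - b x‖ * ‖V‖ * ‖u‖ := by ring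
  have tri : ‖(⟪a x, v x⟫) • ((A - B) u) + (⟪a x - b x, v x⟫) • (B u)
      + (⟪(A - B) u, v x⟫) • (a x) + (⟪B u, v x⟫) • (a x - b x)
      + (⟪a x - b x, V u⟫) • (a x) + (⟪b x, V u⟫) • (a x - b x)‖ ≤
      ‖(⟪a x, v x⟫) • ((A - B) u)‖ + ‖(⟪a x - b x, v x⟫) • (B u)‖
      + ‖(⟪(A - B) u, v x⟫) • (a x)‖ + ‖(⟪B u, v x⟫) • (a x - b x)‖
      + ‖(⟪a x - b x, V u⟫) • (a x)‖ + ‖(⟪b x, V u⟫) • (a x - b x)‖ := by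
    refine (norm_add_le _ _).trans ?_
    gcongr
    refine (norm_add_le _ _).trans ?_
    gcongr
    refine (norm_add_le _ _).trans ?_
    gcongr
    refine (norm_add_le _ _).trans ?_
    gcongr
    exact norm_add_le _ _
  refine tri.trans ?_
  have hmax2 : ‖B‖ * ‖a x - b x‖ * ‖v x‖ * ‖u‖ ≤
      max ‖A‖ ‖B‖ * ‖a x - b x‖ * ‖v x‖ * ‖u‖ := by gcongr
  nlinarith [t1, t2, t3, t4, t5, t6, hmax2, norm_nonneg u, norm_nonneg (v x),
    norm_nonneg (a x - b x)]
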